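/- arXiv:2503.20284 — 2 statements merged into one kernel-verified Lean document; each statement's English description precedes it below -/
import Mathlib

section
/- Fix β ∈ (0, 1/2). Define a sequence (α_n) by α₀ = β²/(2(1+β)) and α_{n+1} = (1−β)α_n + β·min{1/5, (β + α_n − β α_n)/(2(1+β))}. Then (α_n) is strictly increasing, bounded above by β/(1+3β), and converges to β/(1+3β). -/
/-- The bootstrap recursion: for `β ∈ (0, 1/2)`, the sequence defined by
`α₀ = β²/(2(1+β))` and `α_{n+1} = (1−β)α_n + β·min{1/5, (β + α_n − βα_n)/(2(1+β))}`
is strictly increasing, bounded above by `β/(1+3β)`, and converges to `β/(1+3β)`. -/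
theorem stmt12 (β : ℝ) (hβ : β ∈ Set.Ioo (0 : ℝ) (1 / 2))
    (α : ℕ → ℝ) (h0 : α 0 = β ^ 2 / (2 * (1 + β)))
    (hrec : ∀ n, α (n + 1) =
      (1 - β) * α n + β * min (1 / 5) ((β + α n - β * α n) / (2 * (1 + β)))) :
    StrictMono α ∧ (∀ n, α n ≤ β / (1 + 3 * β)) ∧
      Filter.Tendsto α Filter.atTop (nhds (β / (1 + 3 * β))) := by
  obtain ⟨hβ0, hβ2⟩ := hβ
  set L := β / (1 + 3 * β) with hL
  set c := (1 - β) * (2 + 3 * β) / (2 * (1 + β)) with hc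
  have h1β : (0:ℝ) < 2 * (1 + β) := by linarith
  have h13 : (0:ℝ) < 1 + 3 * β := by linarith
  have hc0 : 0 < c := by
    apply div_pos
    · nlinarith
    · linarith
  have hc1 : c < 1 := by
    rw [hc, div_lt_one h1β]; nlinarith
  have hd' : α 0 - L < 0 := by
    rw [h0, hL, sub_neg, div_lt_div_iff₀ h1β h13]; nlinarith
  have hid : β + L - β * L = L * (2 * (1 + β)) := by
    rw [hL]; field_simp; ring
  have key : ∀ x, (1 - β) * x + β * ((β + x - β * x) / (2 * (1 + β))) = L + c * (x - L) := by
    intro x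
    rw [hL, hc]
    field_simp
    ring
  have hLlt : L < 1 / 5 := by
    rw [hL, div_lt_div_iff₀ h13 (by norm_num : (0:ℝ) < 5)]; nlinarith
  have main : ∀ n, α n = L + c ^ n * (α 0 - L) := by
    intro n
    induction n with
    | zero => simp
    | succ n ih =>
      have hpow : 0 < c ^ n := pow_pos hc0 n
      have hαlt : α n < L := by
        rw [ih]
        nlinarith [mul_neg_of_pos_of_neg hpow hd']
      have hmin : (β + α n - β * α n) / (2 * (1 + β)) ≤ 1 / 5 := by
        have hle : (β + α n - β * α n) / (2 * (1 + β)) ≤ L := by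
          rw [div_le_iff₀ h1β]
          nlinarith
        linarith
      rw [hrec n, min_eq_right hmin, key, ih]
      ring
  refine ⟨strictMono_nat_of_lt_succ fun n => ?_, fun n => ?_, ?_⟩
  · rw [main n, main (n + 1), pow_succ]
    nlinarith [mul_neg_of_pos_of_neg (pow_pos hc0 n) hd']
  · rw [main n]
    nlinarith [mul_neg_of_pos_of_neg (pow_pos hc0 n) hd']
  · have hpow := tendsto_pow_atTop_nhds_zero_of_lt_one hc0.le hc1
    have h2 : Filter.Tendsto (fun n => L + c ^ n * (α 0 - L)) Filter.atTop
        (nhds (L + 0 * (α 0 - L))) :=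
      Filter.Tendsto.const_add _ (hpow.mul_const _)
    simpa using h2.congr fun n => (main n).symm
end

section
/- Let α, β ∈ (0,1) with β ≤ 1/2 and α < β. Define Ξ(α, β, r, s) = max{αr, min{β(s−r), β/(1+β) − (2 + β/(1+β))s + r/2, αs}} for 0 ≤ r < s < 1, and λ(α,β) = min over r ∈ [0,1] of max over s ∈ (r,1) of Ξ(α,β,r,s). Then λ(α, β) ≥ αβ/(8 + 12β) > 0. -/
/-- Positivity of the convergence exponent `λ(α,β)` in the main theorem:
with `Ξ(α,β,r,s) = max{αr, min{β(s−r), β/(1+β) − (2+β/(1+β))s + r/2, αs}}`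
(here `α < β` so `α ∧ β = α`), the exponent
`λ(α,β) = inf over r ∈ [0,1) of sup over s ∈ (r,1) of Ξ(α,β,r,s)`
satisfies `λ(α,β) ≥ αβ/(8+12β) > 0`. -/
theorem stmt15 (α β : ℝ) (hβ : β ∈ Set.Ioc (0 : ℝ) (1 / 2))
    (hα : α ∈ Set.Ioo (0 : ℝ) β) :
    α * β / (8 + 12 * β) ≤
      sInf ((fun r : ℝ => sSup ((fun s : ℝ =>
          max (α * r) (min (β * (s - r))
            (min (β / (1 + β) - (2 + β / (1 + β)) * s + r / 2) (α * s)))) ''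
        Set.Ioo r 1)) '' Set.Ico 0 1) ∧
    0 < α * β / (8 + 12 * β) := by
  obtain ⟨hβ0, hβ1⟩ := hβ
  obtain ⟨hα0, hαβ⟩ := hα
  have hα1 : α < 1 := by linarith
  have hden : (0:ℝ) < 8 + 12 * β := by linarith
  have hc : 0 < α * β / (8 + 12 * β) := by positivity
  refine ⟨?_, hc⟩
  apply le_csInf
  · exact ⟨_, Set.mem_image_of_mem _ ⟨le_refl 0, by norm_num⟩⟩
  rintro x ⟨r, ⟨hr0, hr1⟩, rfl⟩
  have hcEq : (α * β / (8 + 12 * β)) * (8 + 12 * β) = α * β := by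
    field_simp
  have hbdd : BddAbove ((fun s : ℝ =>
      max (α * r) (min (β * (s - r))
        (min (β / (1 + β) - (2 + β / (1 + β)) * s + r / 2) (α * s)))) '' Set.Ioo r 1) := by
    refine ⟨α, ?_⟩
    rintro y ⟨s, ⟨hs1, hs2⟩, rfl⟩
    apply max_le
    · nlinarith
    · exact le_trans (min_le_right _ _) (le_trans (min_le_right _ _) (by nlinarith))
  rcases le_or_gt (β / (8 + 12 * β)) r with hrc | hrc
  · -- big r: pick s = (r+1)/2, use α r ≥ c
    have hmem : ((r + 1) / 2 : ℝ) ∈ Set.Ioo r 1 := ⟨by linarith, by linarith⟩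
    refine le_trans ?_ (le_csSup hbdd (Set.mem_image_of_mem _ hmem))
    refine le_trans ?_ (le_max_left _ _)
    have h1 : β / (8 + 12 * β) * (8 + 12 * β) = β := by field_simp
    nlinarith [mul_le_mul_of_nonneg_left hrc (le_of_lt hα0)]
  · -- small r: pick s = β/(4+6β)
    set s : ℝ := β / (4 + 6 * β) with hs
    have hd2 : (0:ℝ) < 4 + 6 * β := by linarith
    have hsEq : s * (4 + 6 * β) = β := div_mul_cancel₀ _ (ne_of_gt hd2)
    have hrEq : β / (8 + 12 * β) * (8 + 12 * β) = β := div_mul_cancel₀ _ (ne_of_gt hden)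
    have hrs : r < s := by
      have : β / (8 + 12 * β) < s := by nlinarith
      linarith
    have hs1 : s < 1 := by nlinarith
    have hbEq : β / (1 + β) * (1 + β) = β := by
      field_simp
    have h1β : (0:ℝ) < 1 + β := by linarith
    refine le_trans ?_ (le_csSup hbdd (Set.mem_image_of_mem _ ⟨hrs, hs1⟩))
    refine le_trans ?_ (le_max_right _ _)
    refine le_min ?_ (le_min ?_ ?_)
    · nlinarith
    · nlinarith [mul_pos hα0 hβ0, sq_nonneg β, mul_nonneg hr0 (le_of_lt hβ0)]
    · nlinarith
end
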